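/- arXiv:2601.17843 — 4 statements merged into one kernel-verified Lean document; each statement's English description precedes it below -/
import Mathlib

section
/- Let q and r be positive natural numbers and let B be a real q×r matrix. Then the real (r+q)×(r+q) block matrix O(B) with blocks O11 = (I_r + BᵀB)^{-1/2}, O12 = Bᵀ(I_q + BBᵀ)^{-1/2}, O21 = −B(I_r + BᵀB)^{-1/2}, O22 = (I_q + BBᵀ)^{-1/2} is orthogonal, i.e. O(B)ᵀ·O(B) = O(B)·O(B)ᵀ = I_{r+q}. -/
open Matrix

/-- Inverse of the unique symmetric positive semidefinite square root of a positive
(semi)definite real matrix (junk value `0` if `P` is not positive semidefinite). -/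
noncomputable def invSqrt {n : Type*} [Fintype n] [DecidableEq n]
    (P : Matrix n n ℝ) : Matrix n n ℝ := by
  classical exact if h : P.PosSemidef then ((h.1.eigenvectorUnitary : Matrix n n ℝ) *
      diagonal ((↑) ∘ (√·) ∘ h.1.eigenvalues) * (star h.1.eigenvectorUnitary : Matrix n n ℝ))⁻¹
    else 0

/-- The symmetric positive semidefinite square root. -/
noncomputable abbrev Matrix.PosSemidef.sqrt {n : Type*} [Fintype n] [DecidableEq n]
    {P : Matrix n n ℝ} (h : P.PosSemidef) : Matrix n n ℝ :=
  (h.1.eigenvectorUnitary : Matrix n n ℝ) *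
      diagonal ((↑) ∘ (√·) ∘ h.1.eigenvalues) * (star h.1.eigenvectorUnitary : Matrix n n ℝ)

lemma Matrix.PosSemidef.sqrt_isHermitian {n : Type*} [Fintype n] [DecidableEq n]
    {P : Matrix n n ℝ} (h : P.PosSemidef) : h.sqrt.IsHermitian := by
  unfold Matrix.IsHermitian
  simp [Matrix.mul_assoc, Matrix.star_eq_conjTranspose, conjTranspose_eq_transpose_of_trivial]

lemma Matrix.PosSemidef.sqrt_mul_self {n : Type*} [Fintype n] [DecidableEq n]
    {P : Matrix n n ℝ} (h : P.PosSemidef) : h.sqrt * h.sqrt = P := by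
  have hU : (star h.1.eigenvectorUnitary : Matrix n n ℝ) * h.1.eigenvectorUnitary = 1 :=
    h.1.eigenvectorUnitary.2.1
  have hD : diagonal ((↑) ∘ (√·) ∘ h.1.eigenvalues) * diagonal ((↑) ∘ (√·) ∘ h.1.eigenvalues)
      = diagonal (RCLike.ofReal ∘ h.1.eigenvalues : n → ℝ) := by
    rw [diagonal_mul_diagonal]
    congr 1
    funext i
    simp [Real.mul_self_sqrt (h.eigenvalues_nonneg i)]
  conv_rhs => rw [h.1.spectral_theorem]
  rw [Unitary.conjStarAlgAut_apply, ← hD]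
  simp only [Matrix.PosSemidef.sqrt, Matrix.mul_assoc]
  rw [← Matrix.mul_assoc (star _) _ (diagonal _ * _), hU, Matrix.one_mul]

lemma invSqrt_transpose {n : Type*} [Fintype n] [DecidableEq n]
    {P : Matrix n n ℝ} (hP : P.PosSemidef) : (invSqrt P)ᵀ = invSqrt P := by
  rw [invSqrt, dif_pos hP, transpose_nonsing_inv]
  congr 1
  rw [← conjTranspose_eq_transpose_of_trivial]
  exact hP.sqrt_isHermitian

lemma invSqrt_mul_invSqrt {n : Type*} [Fintype n] [DecidableEq n]
    {P : Matrix n n ℝ} (hP : P.PosSemidef) : invSqrt P * invSqrt P = P⁻¹ := by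
  rw [invSqrt, dif_pos hP, ← Matrix.mul_inv_rev, hP.sqrt_mul_self]

lemma sqrt_isUnit {n : Type*} [Fintype n] [DecidableEq n]
    {P : Matrix n n ℝ} (hP : P.PosDef) : IsUnit hP.posSemidef.sqrt.det := by
  have h : hP.posSemidef.sqrt.det * hP.posSemidef.sqrt.det = P.det := by
    rw [← Matrix.det_mul, hP.posSemidef.sqrt_mul_self]
  exact isUnit_of_mul_isUnit_left (h ▸ hP.det_pos.ne'.isUnit)

lemma invSqrt_mul_mul {n : Type*} [Fintype n] [DecidableEq n]
    {P : Matrix n n ℝ} (hP : P.PosDef) : invSqrt P * P * invSqrt P = 1 := by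
  have hu := sqrt_isUnit hP
  have h : hP.posSemidef.sqrt⁻¹ * (hP.posSemidef.sqrt * hP.posSemidef.sqrt) *
      hP.posSemidef.sqrt⁻¹ = 1 := by
    rw [← Matrix.mul_assoc, Matrix.nonsing_inv_mul _ hu, Matrix.one_mul,
      Matrix.mul_nonsing_inv _ hu]
  rw [hP.posSemidef.sqrt_mul_self] at h
  rw [invSqrt, dif_pos hP.posSemidef]
  exact h

/-- for any real `q × r` matrix `B`, the block matrix
`O(B) = [[(I_r + BᵀB)^{-1/2}, Bᵀ(I_q + BBᵀ)^{-1/2}], [-B(I_r + BᵀB)^{-1/2}, (I_q + BBᵀ)^{-1/2}]]`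
is orthogonal. -/
theorem stmt_0 (q r : ℕ) (hq : 0 < q) (hr : 0 < r) (B : Matrix (Fin q) (Fin r) ℝ) :
    (fromBlocks (invSqrt (1 + Bᵀ * B)) (Bᵀ * invSqrt (1 + B * Bᵀ))
        (-(B * invSqrt (1 + Bᵀ * B))) (invSqrt (1 + B * Bᵀ)))ᵀ *
      fromBlocks (invSqrt (1 + Bᵀ * B)) (Bᵀ * invSqrt (1 + B * Bᵀ))
        (-(B * invSqrt (1 + Bᵀ * B))) (invSqrt (1 + B * Bᵀ)) = 1 ∧
    fromBlocks (invSqrt (1 + Bᵀ * B)) (Bᵀ * invSqrt (1 + B * Bᵀ))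
        (-(B * invSqrt (1 + Bᵀ * B))) (invSqrt (1 + B * Bᵀ)) *
      (fromBlocks (invSqrt (1 + Bᵀ * B)) (Bᵀ * invSqrt (1 + B * Bᵀ))
        (-(B * invSqrt (1 + Bᵀ * B))) (invSqrt (1 + B * Bᵀ)))ᵀ = 1 := by
  have hBtB : (Bᵀ * B).PosSemidef := by
    have := Matrix.posSemidef_conjTranspose_mul_self B
    rwa [conjTranspose_eq_transpose_of_trivial] at this
  have hBBt : (B * Bᵀ).PosSemidef := by
    have := Matrix.posSemidef_self_mul_conjTranspose B
    rwa [conjTranspose_eq_transpose_of_trivial] at this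
  have hP : (1 + Bᵀ * B).PosDef := Matrix.PosDef.add_posSemidef Matrix.PosDef.one hBtB
  have hQ : (1 + B * Bᵀ).PosDef := Matrix.PosDef.add_posSemidef Matrix.PosDef.one hBBt
  set S := invSqrt (1 + Bᵀ * B) with hSdef
  set T := invSqrt (1 + B * Bᵀ) with hTdef
  have hS : Sᵀ = S := invSqrt_transpose hP.posSemidef
  have hT : Tᵀ = T := invSqrt_transpose hQ.posSemidef
  have hSS : S * S = (1 + Bᵀ * B)⁻¹ := invSqrt_mul_invSqrt hP.posSemidef
  have hTT : T * T = (1 + B * Bᵀ)⁻¹ := invSqrt_mul_invSqrt hQ.posSemidef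
  have hSPS : S * (1 + Bᵀ * B) * S = 1 := invSqrt_mul_mul hP
  have hTQT : T * (1 + B * Bᵀ) * T = 1 := invSqrt_mul_mul hQ
  have hPinv : (1 + Bᵀ * B)⁻¹ * (1 + Bᵀ * B) = 1 :=
    Matrix.nonsing_inv_mul _ hP.det_pos.ne'.isUnit
  have hPinvr : (1 + Bᵀ * B) * (1 + Bᵀ * B)⁻¹ = 1 :=
    Matrix.mul_nonsing_inv _ hP.det_pos.ne'.isUnit
  have hQinv : (1 + B * Bᵀ)⁻¹ * (1 + B * Bᵀ) = 1 :=
    Matrix.nonsing_inv_mul _ hQ.det_pos.ne'.isUnit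
  have hQinvr : (1 + B * Bᵀ) * (1 + B * Bᵀ)⁻¹ = 1 :=
    Matrix.mul_nonsing_inv _ hQ.det_pos.ne'.isUnit
  -- intertwining identities
  have hkey2 : Bᵀ * (1 + B * Bᵀ)⁻¹ = (1 + Bᵀ * B)⁻¹ * Bᵀ := by
    have hkey : (1 + Bᵀ * B) * Bᵀ = Bᵀ * (1 + B * Bᵀ) := by
      simp [Matrix.add_mul, Matrix.mul_add, Matrix.mul_assoc]
    calc Bᵀ * (1 + B * Bᵀ)⁻¹
        = (1 + Bᵀ * B)⁻¹ * ((1 + Bᵀ * B) * Bᵀ) * (1 + B * Bᵀ)⁻¹ := by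
          rw [← Matrix.mul_assoc, hPinv, Matrix.one_mul]
      _ = (1 + Bᵀ * B)⁻¹ * Bᵀ * ((1 + B * Bᵀ) * (1 + B * Bᵀ)⁻¹) := by
          rw [hkey, Matrix.mul_assoc, Matrix.mul_assoc, Matrix.mul_assoc]
      _ = (1 + Bᵀ * B)⁻¹ * Bᵀ := by rw [hQinvr, Matrix.mul_one]
  have hkey3 : B * (1 + Bᵀ * B)⁻¹ = (1 + B * Bᵀ)⁻¹ * B := by
    have hkey : (1 + B * Bᵀ) * B = B * (1 + Bᵀ * B) := by
      simp [Matrix.add_mul, Matrix.mul_add, Matrix.mul_assoc]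
    calc B * (1 + Bᵀ * B)⁻¹
        = (1 + B * Bᵀ)⁻¹ * ((1 + B * Bᵀ) * B) * (1 + Bᵀ * B)⁻¹ := by
          rw [← Matrix.mul_assoc, hQinv, Matrix.one_mul]
      _ = (1 + B * Bᵀ)⁻¹ * B * ((1 + Bᵀ * B) * (1 + Bᵀ * B)⁻¹) := by
          rw [hkey, Matrix.mul_assoc, Matrix.mul_assoc, Matrix.mul_assoc]
      _ = (1 + B * Bᵀ)⁻¹ * B := by rw [hPinvr, Matrix.mul_one]
  constructor
  · rw [fromBlocks_transpose, fromBlocks_multiply, ← fromBlocks_one]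
    simp only [transpose_neg, transpose_mul, transpose_transpose, hS, hT]
    have h11 : S * S + -(S * Bᵀ) * -(B * S) = 1 := by
      rw [← hSPS]
      simp [Matrix.mul_add, Matrix.add_mul, Matrix.mul_assoc]
    have h12 : S * (Bᵀ * T) + -(S * Bᵀ) * T = 0 := by
      simp [Matrix.mul_assoc]
    have h21 : T * B * S + T * -(B * S) = 0 := by
      simp [Matrix.mul_assoc]
    have h22 : T * B * (Bᵀ * T) + T * T = 1 := by
      rw [← hTQT]
      simp [Matrix.mul_add, Matrix.add_mul, Matrix.mul_assoc, add_comm]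
    rw [h11, h12, h21, h22]
  · rw [fromBlocks_transpose, fromBlocks_multiply, ← fromBlocks_one]
    simp only [transpose_neg, transpose_mul, transpose_transpose, hS, hT]
    have h11 : S * S + Bᵀ * T * (T * B) = 1 := by
      rw [hSS, Matrix.mul_assoc, ← Matrix.mul_assoc T T B, hTT, ← Matrix.mul_assoc, hkey2,
        Matrix.mul_assoc,
        show (1 + Bᵀ * B)⁻¹ + (1 + Bᵀ * B)⁻¹ * (Bᵀ * B) = (1 + Bᵀ * B)⁻¹ * (1 + Bᵀ * B) from by
          rw [Matrix.mul_add, Matrix.mul_one], hPinv]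
    have h12 : S * -(S * Bᵀ) + Bᵀ * T * T = 0 := by
      rw [Matrix.mul_neg, ← Matrix.mul_assoc, hSS, Matrix.mul_assoc, hTT, hkey2]
      simp
    have h21 : -(B * S) * S + T * (T * B) = 0 := by
      rw [Matrix.neg_mul, Matrix.mul_assoc, hSS, ← Matrix.mul_assoc, hTT, hkey3]
      simp
    have h22 : -(B * S) * -(S * Bᵀ) + T * T = 1 := by
      rw [Matrix.neg_mul, Matrix.mul_neg, neg_neg, hTT, Matrix.mul_assoc,
        ← Matrix.mul_assoc S S Bᵀ, hSS, ← Matrix.mul_assoc, hkey3, Matrix.mul_assoc,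
        show (1 + B * Bᵀ)⁻¹ * (B * Bᵀ) + (1 + B * Bᵀ)⁻¹ = (1 + B * Bᵀ)⁻¹ * (1 + B * Bᵀ) from by
          rw [Matrix.mul_add, Matrix.mul_one, add_comm], hQinv]
    rw [h11, h12, h21, h22]
end

section
/- Let k, q, r be positive natural numbers with k > q, set k₁ = k − q, and let Ξ be a real k×(r+q) matrix partitioned into blocks Ξ₁₁ ∈ ℝ^{k₁×r}, Ξ₁₂ ∈ ℝ^{k₁×q} (top row of blocks) and Ξ₂₁ ∈ ℝ^{q×r}, Ξ₂₂ ∈ ℝ^{q×q} (bottom row of blocks), where Ξ₂₂ is invertible. Let B = Ξ₂₂^{-1}Ξ₂₁ and let O(B) be the block-orthogonal matrix with blocks O11 = (I_r + BᵀB)^{-1/2}, O12 = Bᵀ(I_q + BBᵀ)^{-1/2}, O21 = −B(I_r + BᵀB)^{-1/2}, O22 = (I_q + BBᵀ)^{-1/2}. Then the matrix Ξ̃ = Ξ·O(B) has blocks Ξ̃₂₁ = 0, Ξ̃₁₁ = (Ξ₁₁ − Ξ₁₂Ξ₂₂^{-1}Ξ₂₁)·O11, Ξ̃₁₂ = (Ξ₁₁Ξ₂₁ᵀ(Ξ₂₂^{-1})ᵀ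 + Ξ₁₂)·O22, and Ξ̃₂₂ = (Ξ₂₁Ξ₂₁ᵀ(Ξ₂₂^{-1})ᵀ + Ξ₂₂)·O22. -/
open Matrix

/-- The block-orthogonal matrix `O(B)` built from a `q × r` matrix `B`. -/
noncomputable def Omat {q r : ℕ} (B : Matrix (Fin q) (Fin r) ℝ) :
    Matrix (Fin r ⊕ Fin q) (Fin r ⊕ Fin q) ℝ :=
  fromBlocks (invSqrt (1 + Bᵀ * B)) (Bᵀ * invSqrt (1 + B * Bᵀ))
    (-(B * invSqrt (1 + Bᵀ * B))) (invSqrt (1 + B * Bᵀ))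

/-- block structure of `Ξ̃ = Ξ · O(B)` with `B = Ξ₂₂⁻¹ Ξ₂₁`. -/
theorem stmt_2 (k q r : ℕ) (hq : 0 < q) (hr : 0 < r) (hk : q < k)
    (Ξ₁₁ : Matrix (Fin (k - q)) (Fin r) ℝ) (Ξ₁₂ : Matrix (Fin (k - q)) (Fin q) ℝ)
    (Ξ₂₁ : Matrix (Fin q) (Fin r) ℝ) (Ξ₂₂ : Matrix (Fin q) (Fin q) ℝ)
    (hΞ₂₂ : IsUnit Ξ₂₂) :
    (fromBlocks Ξ₁₁ Ξ₁₂ Ξ₂₁ Ξ₂₂ * Omat (Ξ₂₂⁻¹ * Ξ₂₁)).toBlocks₂₁ = 0 ∧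
    (fromBlocks Ξ₁₁ Ξ₁₂ Ξ₂₁ Ξ₂₂ * Omat (Ξ₂₂⁻¹ * Ξ₂₁)).toBlocks₁₁
      = (Ξ₁₁ - Ξ₁₂ * Ξ₂₂⁻¹ * Ξ₂₁) * invSqrt (1 + (Ξ₂₂⁻¹ * Ξ₂₁)ᵀ * (Ξ₂₂⁻¹ * Ξ₂₁)) ∧
    (fromBlocks Ξ₁₁ Ξ₁₂ Ξ₂₁ Ξ₂₂ * Omat (Ξ₂₂⁻¹ * Ξ₂₁)).toBlocks₁₂
      = (Ξ₁₁ * Ξ₂₁ᵀ * (Ξ₂₂⁻¹)ᵀ + Ξ₁₂) * invSqrt (1 + (Ξ₂₂⁻¹ * Ξ₂₁) * (Ξ₂₂⁻¹ * Ξ₂₁)ᵀ) ∧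
    (fromBlocks Ξ₁₁ Ξ₁₂ Ξ₂₁ Ξ₂₂ * Omat (Ξ₂₂⁻¹ * Ξ₂₁)).toBlocks₂₂
      = (Ξ₂₁ * Ξ₂₁ᵀ * (Ξ₂₂⁻¹)ᵀ + Ξ₂₂) * invSqrt (1 + (Ξ₂₂⁻¹ * Ξ₂₁) * (Ξ₂₂⁻¹ * Ξ₂₁)ᵀ) := by
  have hinv : Ξ₂₂ * Ξ₂₂⁻¹ = 1 := mul_nonsing_inv _ ((isUnit_iff_isUnit_det _).mp hΞ₂₂)
  refine ⟨?_, ?_, ?_, ?_⟩ <;>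
  simp only [Omat, fromBlocks_multiply, toBlocks_fromBlocks₂₁, toBlocks_fromBlocks₁₁,
    toBlocks_fromBlocks₁₂, toBlocks_fromBlocks₂₂, Matrix.mul_neg, transpose_mul]
  · rw [← Matrix.mul_assoc Ξ₂₂, ← Matrix.mul_assoc Ξ₂₂, hinv, Matrix.one_mul]
    simp
  · simp [Matrix.mul_assoc, sub_eq_add_neg, Matrix.add_mul, Matrix.neg_mul]
  · simp [Matrix.mul_assoc, Matrix.add_mul]
  · simp [Matrix.mul_assoc, Matrix.add_mul]
end

section
/- Let q be a positive natural number, let E be a fixed real q×q matrix, and for t ∈ ℝ let D(t) be a real q×q diagonal matrix whose minimal diagonal entry tends to +∞ as t → ∞. Then there exists T such that for all t ≥ T the matrix D(t) + E is invertible, and (D(t) + E)^{-1} → 0 (entrywise, equivalently in any matrix norm) as t → ∞. -/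
open Matrix Filter

/-- if the minimal diagonal entry of the diagonal matrices `D(t)` tends to `+∞`,
then for `t` large `D(t) + E` is invertible, and `(D(t) + E)⁻¹ → 0` as `t → ∞`. -/
theorem stmt_3 (q : ℕ) (hq : 0 < q) (E : Matrix (Fin q) (Fin q) ℝ)
    (d : ℝ → Fin q → ℝ)
    (hd : Tendsto (fun t => ⨅ j, d t j) atTop atTop) :
    (∃ T : ℝ, ∀ t ≥ T, IsUnit (Matrix.diagonal (d t) + E)) ∧
    Tendsto (fun t => (Matrix.diagonal (d t) + E)⁻¹) atTop
      (nhds (0 : Matrix (Fin q) (Fin q) ℝ)) := by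
  have hdj : ∀ j, Tendsto (fun t => d t j) atTop atTop := fun j =>
    tendsto_atTop_mono (fun t => ciInf_le (Set.Finite.bddBelow (Set.finite_range _)) j) hd
  have hpos : ∀ᶠ t in atTop, ∀ j, 1 ≤ d t j := by
    filter_upwards [hd.eventually_ge_atTop 1] with t ht j
    exact le_trans ht (ciInf_le (Set.Finite.bddBelow (Set.finite_range _)) j)
  set Dinv : ℝ → Matrix (Fin q) (Fin q) ℝ := fun t => diagonal (fun j => (d t j)⁻¹) with hDinv
  -- Dinv tends to 0 entrywise
  have hDinv0 : Tendsto Dinv atTop (nhds 0) := by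
    refine tendsto_pi_nhds.2 ?_
    intro i
    rw [tendsto_pi_nhds]
    intro j
    by_cases hij : i = j
    · subst hij
      simpa [Dinv, diagonal_apply_eq, Function.comp_def] using tendsto_inv_atTop_zero.comp (hdj i)
    · simpa [Dinv, diagonal_apply_ne _ hij] using tendsto_const_nhds (α := ℝ)
  -- 1 + E * Dinv t → 1
  have h1 : Tendsto (fun t => (1 : Matrix (Fin q) (Fin q) ℝ) + E * Dinv t) atTop (nhds 1) := by
    have hE : Tendsto (fun _ : ℝ => E) atTop (nhds E) := tendsto_const_nhds
    have hmul := hE.mul hDinv0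
    have h1c : Tendsto (fun _ : ℝ => (1 : Matrix (Fin q) (Fin q) ℝ)) atTop (nhds 1) :=
      tendsto_const_nhds
    simpa using h1c.add hmul
  -- determinant tends to 1
  have h2 : Tendsto (fun t => ((1 : Matrix (Fin q) (Fin q) ℝ) + E * Dinv t).det) atTop
      (nhds 1) := by
    have hcont : Continuous fun A : Matrix (Fin q) (Fin q) ℝ => A.det :=
      continuous_id.matrix_det
    have := (hcont.tendsto 1).comp h1
    simpa [Function.comp_def] using this
  have hdetne : ∀ᶠ t in atTop, ((1 : Matrix (Fin q) (Fin q) ℝ) + E * Dinv t).det ≠ 0 :=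
    h2.eventually_ne one_ne_zero
  -- factorization, valid when all d t j ≠ 0
  have hfac : ∀ t, (∀ j, 1 ≤ d t j) →
      diagonal (d t) + E = ((1 : Matrix (Fin q) (Fin q) ℝ) + E * Dinv t) * diagonal (d t) := by
    intro t ht
    have hne : ∀ j, d t j ≠ 0 := fun j => ne_of_gt (lt_of_lt_of_le one_pos (ht j))
    have hDD : Dinv t * diagonal (d t) = 1 := by
      rw [hDinv, diagonal_mul_diagonal]
      rw [show (fun j => (d t j)⁻¹ * d t j) = fun _ => (1 : ℝ) from
        funext fun j => inv_mul_cancel₀ (hne j)]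
      exact diagonal_one
    rw [add_mul, one_mul, mul_assoc, hDD, mul_one, add_comm]
  have hDDinv : ∀ t, (∀ j, 1 ≤ d t j) → diagonal (d t) * Dinv t = 1 := by
    intro t ht
    have hne : ∀ j, d t j ≠ 0 := fun j => ne_of_gt (lt_of_lt_of_le one_pos (ht j))
    rw [hDinv, diagonal_mul_diagonal]
    rw [show (fun j => d t j * (d t j)⁻¹) = fun _ => (1 : ℝ) from
      funext fun j => mul_inv_cancel₀ (hne j)]
    exact diagonal_one
  -- eventual invertibility
  have hunit : ∀ᶠ t in atTop, IsUnit (diagonal (d t) + E) := by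
    filter_upwards [hpos, hdetne] with t ht hdt
    rw [hfac t ht, Matrix.isUnit_iff_isUnit_det, det_mul, det_diagonal]
    refine (isUnit_iff_ne_zero).2 (mul_ne_zero hdt ?_)
    exact Finset.prod_ne_zero_iff.2 fun j _ => ne_of_gt (lt_of_lt_of_le one_pos (ht j))
  constructor
  · rw [eventually_atTop] at hunit
    obtain ⟨T, hT⟩ := hunit
    exact ⟨T, hT⟩
  · -- (1 + E * Dinv t)⁻¹ → 1
    have hinv1 : Tendsto (fun t => ((1 : Matrix (Fin q) (Fin q) ℝ) + E * Dinv t)⁻¹) atTop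
        (nhds 1) := by
      have hadj : Tendsto (fun t => ((1 : Matrix (Fin q) (Fin q) ℝ) + E * Dinv t).adjugate)
          atTop (nhds 1) := by
        have hcont : Continuous fun A : Matrix (Fin q) (Fin q) ℝ => A.adjugate :=
          continuous_id.matrix_adjugate
        have := (hcont.tendsto 1).comp h1
        simpa [adjugate_one, Function.comp_def] using this
      have hdetinv : Tendsto
          (fun t => (((1 : Matrix (Fin q) (Fin q) ℝ) + E * Dinv t).det)⁻¹) atTop (nhds 1) := by
        simpa using h2.inv₀ one_ne_zero
      have := hdetinv.smul hadj
      simp only [one_smul] at this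
      refine this.congr fun t => ?_
      rw [Matrix.inv_def, Ring.inverse_eq_inv']
    -- combine
    have hmain : Tendsto (fun t => Dinv t * ((1 : Matrix (Fin q) (Fin q) ℝ) + E * Dinv t)⁻¹)
        atTop (nhds 0) := by
      simpa using hDinv0.mul hinv1
    refine Tendsto.congr' ?_ hmain
    filter_upwards [hpos, hdetne] with t ht hdt
    symm
    apply Matrix.inv_eq_right_inv
    rw [hfac t ht, mul_assoc, ← mul_assoc (diagonal (d t)), hDDinv t ht, one_mul,
      Matrix.mul_nonsing_inv _ (isUnit_iff_ne_zero.2 hdt)]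
end

section
/- Let q be a positive natural number. Let E be a random real q×q matrix, defined on a probability space, whose q² entries form an independent family of real random variables each distributed as a standard Gaussian N(0,1). For t ∈ ℝ let D(t) be a deterministic real q×q diagonal matrix whose minimal diagonal entry tends to +∞ as t → ∞. Then for every ε > 0, the probability of the event {D(t) + E is invertible and ‖(D(t) + E)^{-1}‖ ≤ ε} tends to 1 as t → ∞; equivalently, lim_{t→∞} P(D(t) + E is not invertible, or ‖(D(t) + E)^{-1}‖ > ε) = 0. -/
open Matrix Filter MeasureTheory ProbabilityTheory

attribute [local instance] Matrix.normedAddCommGroup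

/-- Measurability of the determinant of a matrix-valued function with measurable entries. -/
lemma meas_det' {Ω : Type*} [MeasurableSpace Ω] {q : ℕ} {M : Ω → Matrix (Fin q) (Fin q) ℝ}
    (h : ∀ i j, Measurable fun ω => M ω i j) : Measurable fun ω => (M ω).det := by
  simp only [Matrix.det_apply']
  exact Finset.measurable_sum _ fun σ _ =>
    (Finset.measurable_prod _ fun i _ => h _ _).const_mul _

lemma meas_adj' {Ω : Type*} [MeasurableSpace Ω] {q : ℕ} {M : Ω → Matrix (Fin q) (Fin q) ℝ}
    (h : ∀ i j, Measurable fun ω => M ω i j) (i j : Fin q) :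
    Measurable fun ω => (M ω).adjugate i j := by
  simp only [Matrix.adjugate_apply]
  refine meas_det' fun a b => ?_
  simp only [Matrix.updateRow_apply]
  by_cases hab : a = j
  · simp [hab]
  · simpa [hab] using h a b

lemma meas_inv_entry {Ω : Type*} [MeasurableSpace Ω] {q : ℕ} {M : Ω → Matrix (Fin q) (Fin q) ℝ}
    (h : ∀ i j, Measurable fun ω => M ω i j) (i j : Fin q) :
    Measurable fun ω => (M ω)⁻¹ i j := by
  simp only [Matrix.inv_def, Matrix.smul_apply, smul_eq_mul, Ring.inverse_eq_inv']
  exact ((meas_det' h).inv).mul (meas_adj' h i j)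

/-- Deterministic key lemma. -/
lemma det_aux {q : ℕ} (d : ℝ → Fin q → ℝ)
    (hd : Tendsto (fun t => ⨅ j, d t j) atTop atTop)
    (A : Matrix (Fin q) (Fin q) ℝ) {ε : ℝ} (hε : 0 < ε) :
    ∀ᶠ t in atTop, IsUnit (Matrix.diagonal (d t) + A) ∧
      ‖(Matrix.diagonal (d t) + A)⁻¹‖ ≤ ε := by
  have hbdd : ∀ t, BddBelow (Set.range (d t)) := fun t => Set.Finite.bddBelow (Set.finite_range _)
  have h1 : ∀ j, Tendsto (fun t => d t j) atTop atTop := fun j =>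
    tendsto_atTop_mono (fun t => ciInf_le (hbdd t) j) hd
  have hinv : ∀ j, Tendsto (fun t => (d t j)⁻¹) atTop (nhds 0) := fun j =>
    tendsto_inv_atTop_zero.comp (h1 j)
  set Dinv : ℝ → Matrix (Fin q) (Fin q) ℝ := fun t => Matrix.diagonal (fun j => (d t j)⁻¹)
  have hDinv : Tendsto Dinv atTop (nhds 0) := by
    refine tendsto_pi_nhds.2 fun i => tendsto_pi_nhds.2 fun j => ?_
    by_cases hij : i = j
    · subst hij
      simpa [Dinv, Matrix.diagonal_apply] using hinv i
    · simpa [Dinv, Matrix.diagonal_apply, hij] using tendsto_const_nhds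
  have hB : Tendsto (fun t => Dinv t * A) atTop (nhds 0) := by
    have := hDinv.mul (tendsto_const_nhds (x := A) (f := atTop))
    rwa [zero_mul] at this
  have hone : Tendsto (fun t => 1 + Dinv t * A) atTop (nhds 1) := by
    have := (tendsto_const_nhds (x := (1 : Matrix (Fin q) (Fin q) ℝ)) (f := atTop)).add hB
    rwa [add_zero] at this
  have hdet : Tendsto (fun t => (1 + Dinv t * A).det) atTop (nhds 1) := by
    have hc : Continuous fun M : Matrix (Fin q) (Fin q) ℝ => M.det := continuous_id.matrix_det
    have := (hc.tendsto 1).comp hone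
    rwa [Matrix.det_one] at this
  have hIsU : ∀ᶠ t in atTop, IsUnit (1 + Dinv t * A) := by
    filter_upwards [hdet.eventually_ne one_ne_zero] with t ht
    exact (Matrix.isUnit_iff_isUnit_det _).2 (isUnit_iff_ne_zero.2 ht)
  have hinvmat : Tendsto (fun t => (1 + Dinv t * A)⁻¹) atTop (nhds 1) := by
    have hca : ContinuousAt Inv.inv (1 : Matrix (Fin q) (Fin q) ℝ) := by
      refine continuousAt_matrix_inv _ ?_
      rw [Matrix.det_one, Ring.inverse_eq_inv']
      exact continuousAt_inv₀ one_ne_zero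
    have := hca.tendsto.comp hone
    rwa [inv_one] at this
  have hprod : Tendsto (fun t => (1 + Dinv t * A)⁻¹ * Dinv t) atTop (nhds 0) := by
    have := hinvmat.mul hDinv
    rwa [one_mul] at this
  have hentry : ∀ i j, Tendsto (fun t => ((1 + Dinv t * A)⁻¹ * Dinv t) i j) atTop (nhds 0) := by
    intro i j
    have := (tendsto_pi_nhds.1 hprod) i
    simpa using (tendsto_pi_nhds.1 this) j
  have hnormev : ∀ᶠ t in atTop, ∀ i j, ‖((1 + Dinv t * A)⁻¹ * Dinv t) i j‖ ≤ ε := by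
    refine eventually_all.2 fun i => eventually_all.2 fun j => ?_
    have h2 := (hentry i j).norm
    rw [norm_zero] at h2
    exact h2.eventually (eventually_le_nhds hε)
  filter_upwards [hIsU, hnormev, hd.eventually_ge_atTop 1] with t htu htn htd
  have hdne : ∀ j, d t j ≠ 0 := by
    intro j
    have : (1 : ℝ) ≤ d t j := le_trans htd (ciInf_le (hbdd t) j)
    linarith
  have hDunit : IsUnit (Matrix.diagonal (d t)) := by
    refine (Matrix.isUnit_iff_isUnit_det _).2 (isUnit_iff_ne_zero.2 ?_)
    rw [Matrix.det_diagonal]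
    exact Finset.prod_ne_zero_iff.2 fun j _ => hdne j
  have hone' : Matrix.diagonal (d t) * Dinv t = 1 := by
    have harg : (fun i => d t i * (d t i)⁻¹) = (fun _ => 1 : Fin q → ℝ) :=
      funext fun j => mul_inv_cancel₀ (hdne j)
    rw [Matrix.diagonal_mul_diagonal, harg, Matrix.diagonal_one]
  have hfact : Matrix.diagonal (d t) * (1 + Dinv t * A) = Matrix.diagonal (d t) + A := by
    rw [mul_add, mul_one, ← mul_assoc, hone', one_mul]
  have hDinv_eq : (Matrix.diagonal (d t))⁻¹ = Dinv t :=
    Matrix.inv_eq_right_inv hone'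
  constructor
  · rw [← hfact]; exact hDunit.mul htu
  · rw [← hfact, Matrix.mul_inv_rev, hDinv_eq]
    exact (Matrix.norm_le_iff hε.le).2 (htn)

/-- with `E` a random `q × q` matrix with i.i.d. standard Gaussian entries and
`D(t)` deterministic diagonal matrices whose minimal diagonal entry tends to `+∞`, for every
`ε > 0` the probability that `D(t) + E` is invertible with `‖(D(t) + E)⁻¹‖ ≤ ε` tends to `1`. -/
theorem stmt_4 {Ω : Type*} [MeasureSpace Ω] [IsProbabilityMeasure (ℙ : Measure Ω)]
    (q : ℕ) (hq : 0 < q) (E : Ω → Matrix (Fin q) (Fin q) ℝ)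
    (hmeas : ∀ i j, Measurable fun ω => E ω i j)
    (hindep : iIndepFun
      (fun (ij : Fin q × Fin q) ω => E ω ij.1 ij.2) ℙ)
    (hlaw : ∀ i j, Measure.map (fun ω => E ω i j) ℙ = gaussianReal 0 1)
    (d : ℝ → Fin q → ℝ)
    (hd : Tendsto (fun t => ⨅ j, d t j) atTop atTop)
    (ε : ℝ) (hε : 0 < ε) :
    Tendsto (fun t => ℙ {ω | IsUnit (Matrix.diagonal (d t) + E ω) ∧
        ‖(Matrix.diagonal (d t) + E ω)⁻¹‖ ≤ ε}) atTop (nhds 1) := by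
  set As : ℝ → Set Ω := fun t => {ω | IsUnit (Matrix.diagonal (d t) + E ω) ∧
        ‖(Matrix.diagonal (d t) + E ω)⁻¹‖ ≤ ε} with hAs
  have hMent : ∀ t i j, Measurable fun ω => (Matrix.diagonal (d t) + E ω) i j := by
    intro t i j
    simp only [Matrix.add_apply]
    exact (hmeas i j).const_add _
  have hmble : ∀ t, MeasurableSet (As t) := by
    intro t
    have h1 : MeasurableSet {ω | (Matrix.diagonal (d t) + E ω).det ≠ 0} :=
      ((meas_det' (hMent t)) (measurableSet_singleton 0)).compl
    have h2 : MeasurableSet {ω | ∀ i j, ‖(Matrix.diagonal (d t) + E ω)⁻¹ i j‖ ≤ ε} := by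
      have hrw : {ω | ∀ i j, ‖(Matrix.diagonal (d t) + E ω)⁻¹ i j‖ ≤ ε} =
          ⋂ i, ⋂ j, {ω | ‖(Matrix.diagonal (d t) + E ω)⁻¹ i j‖ ≤ ε} := by
        ext ω; simp
      rw [hrw]
      exact MeasurableSet.iInter fun i => MeasurableSet.iInter fun j =>
        measurableSet_le (meas_inv_entry (hMent t) i j).norm measurable_const
    have : As t = {ω | (Matrix.diagonal (d t) + E ω).det ≠ 0} ∩
        {ω | ∀ i j, ‖(Matrix.diagonal (d t) + E ω)⁻¹ i j‖ ≤ ε} := by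
      ext ω
      simp only [hAs, Set.mem_setOf_eq, Set.mem_inter_iff, Matrix.isUnit_iff_isUnit_det,
        isUnit_iff_ne_zero, Matrix.norm_le_iff hε.le, Real.norm_eq_abs]
    rw [this]
    exact h1.inter h2
  have hlim : ∀ᵐ ω ∂(ℙ : Measure Ω), ∀ᶠ t in atTop, ω ∈ As t ↔ ω ∈ Set.univ := by
    refine Eventually.of_forall fun ω => ?_
    filter_upwards [det_aux d hd (E ω) hε] with t ht
    simpa [hAs, Set.mem_setOf_eq] using ht
  have := tendsto_measure_of_ae_tendsto_indicator_of_isFiniteMeasure (μ := (ℙ : Measure Ω))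
    atTop MeasurableSet.univ hmble hlim
  simpa [measure_univ] using this
end
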